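/- For any ξ_m > 0, λ > 0, and μ ∈ (0, ξ_m), the critical-temperature equation ξ_m/λ = 2T_c·log(cosh(ξ_m/(2T_c))/cosh(μ/(2T_c))) + μ·∫₀^μ tanh(ξ/(2T_c))/ξ dξ has exactly one solution T_c > 0, and T_c is strictly increasing as a function of μ (for fixed ξ_m, λ) and strictly increasing as a function of λ (for fixed ξ_m, μ). -/

import Mathlib

open Real MeasureTheory intervalIntegral Set Filter

namespace BCSAux

lemma tanh_def (t : ℝ) : Real.tanh t = Real.sinh t / Real.cosh t :=
  Real.tanh_eq_sinh_div_cosh t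

lemma tanh_nonneg {t : ℝ} (ht : 0 ≤ t) : 0 ≤ Real.tanh t := by
  rw [tanh_def]; exact div_nonneg (Real.sinh_nonneg_iff.2 ht) (Real.cosh_pos t).le

lemma tanh_pos {t : ℝ} (ht : 0 < t) : 0 < Real.tanh t := by
  rw [tanh_def]; exact div_pos (Real.sinh_pos_iff.2 ht) (Real.cosh_pos t)

lemma tanh_lt_one (t : ℝ) : Real.tanh t < 1 := by
  rw [tanh_def, div_lt_one (Real.cosh_pos t)]
  nlinarith [Real.cosh_sub_sinh t, Real.exp_pos (-t)]

lemma tanh_mono {a b : ℝ} (hab : a ≤ b) : Real.tanh a ≤ Real.tanh b := by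
  rw [tanh_def, tanh_def, div_le_div_iff₀ (Real.cosh_pos a) (Real.cosh_pos b)]
  nlinarith [Real.sinh_sub b a, Real.sinh_nonneg_iff.2 (sub_nonneg.2 hab),
    Real.cosh_pos a, Real.cosh_pos b]

lemma continuous_tanh : Continuous Real.tanh := by
  simp only [funext tanh_def]
  exact Real.continuous_sinh.div Real.continuous_cosh fun t => (Real.cosh_pos t).ne'

lemma hasDerivAt_tanh (t : ℝ) :
    HasDerivAt Real.tanh (1 / Real.cosh t ^ 2) t := by
  have h := (Real.hasDerivAt_sinh t).div (Real.hasDerivAt_cosh t) (Real.cosh_pos t).ne'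
  have : HasDerivAt (fun x => Real.sinh x / Real.cosh x)
      ((Real.cosh t * Real.cosh t - Real.sinh t * Real.sinh t) / Real.cosh t ^ 2) t := h
  simp only [funext tanh_def]
  convert this using 1
  have := Real.cosh_sq_sub_sinh_sq t
  ring_nf
  nlinarith [this]

lemma tanh_le_self {t : ℝ} (ht : 0 ≤ t) : Real.tanh t ≤ t := by
  have key : ∀ x : ℝ, 0 ≤ x → Real.sinh x ≤ x * Real.cosh x := by
    intro x hx
    have hmono : MonotoneOn (fun y => y * Real.cosh y - Real.sinh y) (Set.Ici 0) := by
      have hder : ∀ y : ℝ, HasDerivAt (fun y => y * Real.cosh y - Real.sinh y)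
          (1 * Real.cosh y + y * Real.sinh y - Real.cosh y) y := fun y =>
        ((hasDerivAt_id y).mul (Real.hasDerivAt_cosh y)).sub (Real.hasDerivAt_sinh y)
      apply monotoneOn_of_deriv_nonneg (convex_Ici 0)
      · exact ((continuous_id.mul Real.continuous_cosh).sub Real.continuous_sinh).continuousOn
      · intro y _
        exact (hder y).differentiableAt.differentiableWithinAt
      · intro y hy
        rw [(hder y).deriv]
        rw [interior_Ici, Set.mem_Ioi] at hy
        nlinarith [Real.sinh_nonneg_iff.2 hy.le]
    have := hmono (Set.self_mem_Ici) (Set.mem_Ici.2 hx) hx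
    simpa using this
  rw [tanh_def, div_le_iff₀ (Real.cosh_pos t)]
  exact key t ht

/-- The integrand `tanh t / t`. -/
noncomputable def f0 (t : ℝ) : ℝ := Real.tanh t / t

lemma f0_neg (t : ℝ) : f0 (-t) = f0 t := by
  unfold f0
  rw [Real.tanh_neg, neg_div_neg_eq]

lemma f0_nonneg (t : ℝ) : 0 ≤ f0 t := by
  rcases lt_trichotomy t 0 with h | h | h
  · rw [← f0_neg]
    exact div_nonneg (tanh_nonneg (by linarith)) (by linarith)
  · simp [f0, h]
  · exact div_nonneg (tanh_nonneg h.le) h.le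

lemma f0_le_one (t : ℝ) : f0 t ≤ 1 := by
  rcases lt_trichotomy t 0 with h | h | h
  · rw [← f0_neg]
    unfold f0
    rw [div_le_one (by linarith)]
    exact tanh_le_self (by linarith)
  · simp [f0, h]
  · unfold f0
    rw [div_le_one h]
    exact tanh_le_self h.le

lemma f0_pos {t : ℝ} (ht : 0 < t) : 0 < f0 t := div_pos (tanh_pos ht) ht

lemma measurable_f0 : Measurable f0 :=
  continuous_tanh.measurable.div measurable_id

lemma f0_intervalIntegrable (a b : ℝ) : IntervalIntegrable f0 volume a b := by
  apply IntervalIntegrable.mono_fun (_root_.intervalIntegrable_const (c := (1:ℝ)))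
  · exact measurable_f0.aestronglyMeasurable
  · refine Filter.Eventually.of_forall fun x => ?_
    simp only [Real.norm_eq_abs]
    rw [abs_of_nonneg (f0_nonneg x), abs_one]
    exact f0_le_one x

/-- The primitive `Ψ x = ∫₀ˣ tanh t / t dt`. -/
noncomputable def Psi (x : ℝ) : ℝ := ∫ t in (0:ℝ)..x, f0 t

lemma continuous_Psi : Continuous Psi :=
  intervalIntegral.continuous_primitive (fun a b => f0_intervalIntegrable a b) 0

lemma Psi_sub {a b : ℝ} : Psi b - Psi a = ∫ t in a..b, f0 t := by
  unfold Psi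
  rw [← intervalIntegral.integral_add_adjacent_intervals
    (f0_intervalIntegrable 0 a) (f0_intervalIntegrable a b)]
  ring

lemma Psi_pos {x : ℝ} (hx : 0 < x) : 0 < Psi x := by
  apply intervalIntegral.intervalIntegral_pos_of_pos_on (f0_intervalIntegrable 0 x)
    (fun t ht => f0_pos ht.1) hx

lemma Psi_nonneg {x : ℝ} (hx : 0 ≤ x) : 0 ≤ Psi x := by
  rcases hx.lt_or_eq with h | h
  · exact (Psi_pos h).le
  · simp [Psi, ← h]

lemma Psi_strict {a b : ℝ} (ha : 0 ≤ a) (hab : a < b) : Psi a < Psi b := by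
  have : 0 < Psi b - Psi a := by
    rw [Psi_sub]
    exact intervalIntegral.intervalIntegral_pos_of_pos_on (f0_intervalIntegrable a b)
      (fun t ht => f0_pos (lt_of_le_of_lt ha ht.1)) hab
  linarith

lemma hasDerivAt_Psi {x : ℝ} (hx : 0 < x) : HasDerivAt Psi (f0 x) x := by
  apply intervalIntegral.integral_hasDerivAt_right (f0_intervalIntegrable 0 x)
  · exact measurable_f0.stronglyMeasurable.stronglyMeasurableAtFilter
  · exact (continuous_tanh.continuousAt).div continuousAt_id hx.ne'

lemma Psi_le_self {x : ℝ} (hx : 0 ≤ x) : Psi x ≤ x := by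
  calc Psi x ≤ ∫ t in (0:ℝ)..x, (1:ℝ) := by
        apply intervalIntegral.integral_mono_on hx (f0_intervalIntegrable 0 x)
          (_root_.intervalIntegrable_const (c := (1:ℝ)))
        intro t _; exact f0_le_one t
    _ = x := by simp

lemma Psi_lower {x : ℝ} (hx : 1 ≤ x) : Real.tanh 1 * Real.log x ≤ Psi x := by
  have h1 : Psi x = Psi 1 + ∫ t in (1:ℝ)..x, f0 t := by
    have := Psi_sub (a := 1) (b := x); linarith
  have h2 : (∫ t in (1:ℝ)..x, Real.tanh 1 * (1 / t)) ≤ ∫ t in (1:ℝ)..x, f0 t := by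
    apply intervalIntegral.integral_mono_on hx
    · apply ContinuousOn.intervalIntegrable
      apply ContinuousOn.mul continuousOn_const
      apply ContinuousOn.div continuousOn_const continuousOn_id
      intro t ht
      rw [Set.uIcc_of_le hx] at ht
      exact (lt_of_lt_of_le one_pos ht.1).ne'
    · exact f0_intervalIntegrable 1 x
    · intro t ht
      unfold f0
      rw [mul_one_div, div_le_div_iff₀ (by linarith [ht.1]) (by linarith [ht.1])]
      have := tanh_mono ht.1
      nlinarith [tanh_pos (one_pos), ht.1]
  have h3 : (∫ t in (1:ℝ)..x, Real.tanh 1 * (1 / t)) = Real.tanh 1 * Real.log x := by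
    rw [intervalIntegral.integral_const_mul, integral_one_div_of_pos one_pos (by linarith),
      div_one]
  have h4 : 0 ≤ Psi 1 := Psi_nonneg zero_le_one
  linarith

/-- `lc t = log (cosh t)`. -/
noncomputable def lc (t : ℝ) : ℝ := Real.log (Real.cosh t)

lemma lc_zero : lc 0 = 0 := by simp [lc]

lemma hasDerivAt_lc (t : ℝ) : HasDerivAt lc (Real.tanh t) t := by
  have := (Real.hasDerivAt_cosh t).log (Real.cosh_pos t).ne'
  unfold lc
  simpa [tanh_def] using this

lemma continuous_lc : Continuous lc :=
  Real.continuous_cosh.log fun t => (Real.cosh_pos t).ne'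

lemma lc_nonneg (t : ℝ) : 0 ≤ lc t :=
  Real.log_nonneg (Real.one_le_cosh t)

lemma lc_mono {a b : ℝ} (ha : 0 ≤ a) (hab : a ≤ b) : lc a ≤ lc b := by
  apply Real.log_le_log (Real.cosh_pos a)
  rw [Real.cosh_le_cosh]
  rw [abs_of_nonneg ha, abs_of_nonneg (ha.trans hab)]
  exact hab

/-- `h t = t * tanh t - log cosh t`, strictly monotone on `[0, ∞)`. -/
noncomputable def hfun (t : ℝ) : ℝ := t * Real.tanh t - lc t

lemma hasDerivAt_hfun (t : ℝ) :
    HasDerivAt hfun (t * (1 / Real.cosh t ^ 2)) t := by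
  have h := ((hasDerivAt_id t).mul (hasDerivAt_tanh t)).sub (hasDerivAt_lc t)
  have e : hfun = id * Real.tanh - lc := by funext x; rfl
  rw [e]
  refine h.congr_deriv ?_
  show 1 * Real.tanh t + t * _ - Real.tanh t = t * _
  ring

lemma hfun_strictMono : StrictMonoOn hfun (Set.Ici 0) := by
  apply strictMonoOn_of_deriv_pos (convex_Ici 0)
  · exact ((continuous_id.mul continuous_tanh).sub continuous_lc).continuousOn
  · intro t ht
    rw [interior_Ici, Set.mem_Ioi] at ht
    rw [(hasDerivAt_hfun t).deriv]
    positivity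

lemma lc_le {t : ℝ} (ht : 0 ≤ t) : lc t ≤ t * Real.tanh t := by
  rcases ht.lt_or_eq with h | h
  · have := hfun_strictMono Set.self_mem_Ici (Set.mem_Ici.2 ht) h
    simp only [hfun, lc_zero, Real.tanh_zero, mul_zero, zero_sub, sub_zero, neg_zero] at this
    linarith
  · simp [← h, lc_zero]

/-- The rescaled right-hand side, as a function of `s = 1/(2T)`. -/
noncomputable def G (ξm μ s : ℝ) : ℝ := (lc (s * ξm) - lc (s * μ)) / s + μ * Psi (s * μ)

lemma hasDerivAt_A {ξm μ : ℝ} {s : ℝ} (hs : s ≠ 0) :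
    HasDerivAt (fun s => (lc (s * ξm) - lc (s * μ)) / s)
      (((Real.tanh (s * ξm) * ξm - Real.tanh (s * μ) * μ) * s
        - (lc (s * ξm) - lc (s * μ)) * 1) / s ^ 2) s := by
  have h1 : HasDerivAt (fun s : ℝ => lc (s * ξm)) (Real.tanh (s * ξm) * ξm) s :=
    by have := (hasDerivAt_lc (s * ξm)).comp s (hasDerivAt_mul_const ξm); exact this
  have h2 : HasDerivAt (fun s : ℝ => lc (s * μ)) (Real.tanh (s * μ) * μ) s :=
    by have := (hasDerivAt_lc (s * μ)).comp s (hasDerivAt_mul_const μ); exact this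
  exact (h1.sub h2).div (hasDerivAt_id s) hs

lemma continuousOn_A (ξm μ : ℝ) :
    ContinuousOn (fun s => (lc (s * ξm) - lc (s * μ)) / s) (Set.Ioi 0) := by
  apply ContinuousOn.div
  · exact (((continuous_lc.comp (continuous_id.mul continuous_const)).sub
      (continuous_lc.comp (continuous_id.mul continuous_const)))).continuousOn
  · exact continuousOn_id
  · intro s hs; exact (Set.mem_Ioi.1 hs).ne'

lemma A_strictMono {ξm μ : ℝ} (hμ : 0 < μ) (hμξ : μ < ξm) :
    StrictMonoOn (fun s => (lc (s * ξm) - lc (s * μ)) / s) (Set.Ioi 0) := by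
  apply strictMonoOn_of_deriv_pos (convex_Ioi 0) (continuousOn_A ξm μ)
  intro s hs
  rw [interior_Ioi, Set.mem_Ioi] at hs
  rw [(hasDerivAt_A hs.ne').deriv]
  have hξ : 0 < ξm := hμ.trans hμξ
  have key : hfun (s * μ) < hfun (s * ξm) := by
    apply hfun_strictMono (Set.mem_Ici.2 (by positivity)) (Set.mem_Ici.2 (by positivity))
    exact (mul_lt_mul_iff_right₀ hs).2 hμξ
  have hnum : (Real.tanh (s * ξm) * ξm - Real.tanh (s * μ) * μ) * s
      - (lc (s * ξm) - lc (s * μ)) * 1 = hfun (s * ξm) - hfun (s * μ) := by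
    unfold hfun; ring
  rw [hnum]
  exact div_pos (by linarith) (by positivity)

lemma G_strictMono_s {ξm μ : ℝ} (hμ : 0 < μ) (hμξ : μ < ξm) :
    StrictMonoOn (G ξm μ) (Set.Ioi 0) := by
  intro s₁ h1 s₂ h2 h12
  rw [Set.mem_Ioi] at h1 h2
  have hA := A_strictMono hμ hμξ (Set.mem_Ioi.2 h1) (Set.mem_Ioi.2 h2) h12
  have hB : Psi (s₁ * μ) < Psi (s₂ * μ) :=
    Psi_strict (by positivity) ((mul_lt_mul_iff_left₀ hμ).2 h12)
  have := mul_lt_mul_of_pos_left hB hμ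
  unfold G
  dsimp only at hA ⊢
  linarith

lemma G_strictMono_mu {ξm s : ℝ} (hs : 0 < s) :
    StrictMonoOn (fun μ => G ξm μ s) (Set.Ioi 0) := by
  apply strictMonoOn_of_deriv_pos (convex_Ioi 0)
  · apply ContinuousOn.add
    · apply ContinuousOn.div
      · exact ((continuous_const.sub
          (continuous_lc.comp (continuous_const.mul continuous_id)))).continuousOn
      · exact continuousOn_const
      · intro _ _; exact hs.ne'
    · exact (continuous_id.mul
        (continuous_Psi.comp (continuous_const.mul continuous_id))).continuousOn
  · intro μ hμ
    rw [interior_Ioi, Set.mem_Ioi] at hμ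
    have hsμ : 0 < s * μ := by positivity
    have h1 : HasDerivAt (fun μ : ℝ => (lc (s * ξm) - lc (s * μ)) / s)
        ((0 - Real.tanh (s * μ) * (s * 1)) / s) μ := by
      apply HasDerivAt.div_const
      exact (hasDerivAt_const μ (lc (s * ξm))).sub
        ((hasDerivAt_lc (s * μ)).comp μ ((hasDerivAt_id μ).const_mul s))
    have h2 : HasDerivAt (fun μ : ℝ => μ * Psi (s * μ))
        (1 * Psi (s * μ) + μ * (f0 (s * μ) * (s * 1))) μ := by
      exact (hasDerivAt_id μ).mul
        ((hasDerivAt_Psi hsμ).comp μ ((hasDerivAt_id μ).const_mul s))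
    have h3 : HasDerivAt (fun μ => G ξm μ s)
        ((0 - Real.tanh (s * μ) * (s * 1)) / s + (1 * Psi (s * μ) + μ * (f0 (s * μ) * (s * 1)))) μ :=
      h1.add h2
    have heq : (0 - Real.tanh (s * μ) * (s * 1)) / s + (1 * Psi (s * μ) + μ * (f0 (s * μ) * (s * 1)))
        = Psi (s * μ) := by
      unfold f0
      field_simp
      ring
    rw [heq] at h3
    rw [h3.deriv]
    exact Psi_pos hsμ

lemma G_upper {ξm μ s : ℝ} (hμ : 0 < μ) (hμξ : μ < ξm) (hs : 0 < s) :
    G ξm μ s ≤ ξm * Real.tanh (s * ξm) + μ * (s * μ) := by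
  have hξ : 0 < ξm := hμ.trans hμξ
  have h1 : (lc (s * ξm) - lc (s * μ)) / s ≤ ξm * Real.tanh (s * ξm) := by
    have ha : lc (s * ξm) - lc (s * μ) ≤ lc (s * ξm) := by
      linarith [lc_nonneg (s * μ)]
    have hb : lc (s * ξm) ≤ (s * ξm) * Real.tanh (s * ξm) := lc_le (by positivity)
    rw [div_le_iff₀ hs]
    nlinarith
  have h2 : μ * Psi (s * μ) ≤ μ * (s * μ) :=
    mul_le_mul_of_nonneg_left (Psi_le_self (by positivity)) hμ.le
  unfold G; linarith

lemma G_lower {ξm μ s : ℝ} (hμ : 0 < μ) (hμξ : μ < ξm) (hs : 0 < s) (h1 : 1 ≤ s * μ) :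
    μ * (Real.tanh 1 * Real.log (s * μ)) ≤ G ξm μ s := by
  have hA : 0 ≤ (lc (s * ξm) - lc (s * μ)) / s := by
    apply div_nonneg _ hs.le
    linarith [lc_mono (a := s * μ) (b := s * ξm) (by positivity)
      ((mul_le_mul_iff_right₀ hs).2 hμξ.le)]
  have hB : μ * (Real.tanh 1 * Real.log (s * μ)) ≤ μ * Psi (s * μ) :=
    mul_le_mul_of_nonneg_left (Psi_lower h1) hμ.le
  unfold G; linarith

lemma continuousOn_G (ξm μ : ℝ) : ContinuousOn (G ξm μ) (Set.Ioi 0) := by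
  apply ContinuousOn.add (continuousOn_A ξm μ)
  exact (continuous_const.mul
    (continuous_Psi.comp (continuous_id.mul continuous_const))).continuousOn

lemma critEq_iff {ξm lam μ T : ℝ} (hT : 0 < T) :
    (ξm / lam = 2 * T * Real.log (Real.cosh (ξm / (2 * T)) / Real.cosh (μ / (2 * T)))
      + μ * ∫ ξ in (0:ℝ)..μ, Real.tanh (ξ / (2 * T)) / ξ)
    ↔ ξm / lam = G ξm μ (2 * T)⁻¹ := by
  set s : ℝ := (2 * T)⁻¹ with hs_def
  have hs : 0 < s := by positivity
  have h2T : 2 * T = s⁻¹ := by rw [hs_def, inv_inv]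
  have hdiv : ∀ x : ℝ, x / (2 * T) = s * x := by
    intro x; rw [div_eq_mul_inv, ← hs_def, mul_comm]
  have hlog : Real.log (Real.cosh (ξm / (2 * T)) / Real.cosh (μ / (2 * T)))
      = lc (s * ξm) - lc (s * μ) := by
    rw [hdiv, hdiv, lc, lc, Real.log_div (Real.cosh_pos _).ne' (Real.cosh_pos _).ne']
  have hint : (∫ ξ in (0:ℝ)..μ, Real.tanh (ξ / (2 * T)) / ξ) = Psi (s * μ) := by
    have e1 : (fun ξ => Real.tanh (ξ / (2 * T)) / ξ) = fun ξ => s * f0 (s * ξ) := by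
      funext ξ
      rcases eq_or_ne ξ 0 with h | h
      · simp [h, f0]
      · rw [hdiv, f0]
        field_simp
    rw [e1]
    rw [intervalIntegral.integral_const_mul, intervalIntegral.integral_comp_mul_left f0 hs.ne']
    rw [mul_zero, smul_eq_mul, ← mul_assoc, mul_inv_cancel₀ hs.ne', one_mul]
    rfl
  rw [hlog, hint]
  unfold G
  rw [h2T]
  rw [inv_mul_eq_div]

end BCSAux

noncomputable def critEq (ξm lam μ Tc : ℝ) : Prop :=
  ξm / lam = 2 * Tc * Real.log (Real.cosh (ξm / (2 * Tc)) / Real.cosh (μ / (2 * Tc)))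
    + μ * ∫ ξ in (0 : ℝ)..μ, Real.tanh (ξ / (2 * Tc)) / ξ

open BCSAux Set

theorem critical_temperature_exists_unique_and_monotone (ξm : ℝ) (hξ : 0 < ξm) :
    (∀ lam μ : ℝ, 0 < lam → 0 < μ → μ < ξm → ∃! Tc : ℝ, 0 < Tc ∧ critEq ξm lam μ Tc) ∧
    (∀ lam μ₁ μ₂ T₁ T₂ : ℝ, 0 < lam → 0 < μ₁ → μ₁ < μ₂ → μ₂ < ξm →
      0 < T₁ → 0 < T₂ → critEq ξm lam μ₁ T₁ → critEq ξm lam μ₂ T₂ → T₁ < T₂) ∧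
    (∀ lam₁ lam₂ μ T₁ T₂ : ℝ, 0 < lam₁ → lam₁ < lam₂ → 0 < μ → μ < ξm →
      0 < T₁ → 0 < T₂ → critEq ξm lam₁ μ T₁ → critEq ξm lam₂ μ T₂ → T₁ < T₂) := by
  have key : ∀ {μ T₁ T₂ : ℝ}, 0 < μ → μ < ξm → 0 < T₁ → 0 < T₂ →
      G ξm μ (2 * T₂)⁻¹ < G ξm μ (2 * T₁)⁻¹ → T₁ < T₂ := by
    intro μ T₁ T₂ hμ hμξ hT₁ hT₂ hlt
    by_contra hcon
    push_neg at hcon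
    have hle : (2 * T₁)⁻¹ ≤ (2 * T₂)⁻¹ := by
      apply inv_anti₀ (by positivity)
      linarith
    rcases hle.lt_or_eq with h | h
    · exact absurd ((G_strictMono_s hμ hμξ) (mem_Ioi.2 (by positivity))
        (mem_Ioi.2 (by positivity)) h) (by linarith)
    · rw [h] at hlt; exact lt_irrefl _ hlt
  refine ⟨?_, ?_, ?_⟩
  · -- existence and uniqueness
    intro lam μ hlam hμ hμξ
    set c : ℝ := ξm / lam with hc_def
    have hc : 0 < c := by positivity
    have htanh1 : 0 < Real.tanh 1 := tanh_pos one_pos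
    -- small s with G < c
    have hcont : Continuous fun s : ℝ => ξm * Real.tanh (s * ξm) + μ * (s * μ) := by
      exact (continuous_const.mul (continuous_tanh.comp
        (continuous_id.mul continuous_const))).add
        (continuous_const.mul (continuous_id.mul continuous_const))
    have htend : Filter.Tendsto (fun s : ℝ => ξm * Real.tanh (s * ξm) + μ * (s * μ))
        (nhds 0) (nhds 0) := by
      have := hcont.tendsto 0
      simpa using this
    have hev : ∀ᶠ s in nhdsWithin 0 (Ioi 0),
        ξm * Real.tanh (s * ξm) + μ * (s * μ) < c ∧ s ∈ Ioi (0:ℝ) :=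
      ((htend.mono_left nhdsWithin_le_nhds).eventually_lt_const hc).and
        self_mem_nhdsWithin
    obtain ⟨s₁, hs₁bound, hs₁pos⟩ := hev.exists
    rw [mem_Ioi] at hs₁pos
    have hGs₁ : G ξm μ s₁ < c := lt_of_le_of_lt (G_upper hμ hμξ hs₁pos) hs₁bound
    -- large s with G > c
    set s₂ : ℝ := Real.exp (c / (μ * Real.tanh 1) + 1) / μ with hs₂_def
    have hs₂pos : 0 < s₂ := by positivity
    have hs₂μ : s₂ * μ = Real.exp (c / (μ * Real.tanh 1) + 1) := by
      rw [hs₂_def]; field_simp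
    have h1le : 1 ≤ s₂ * μ := by
      rw [hs₂μ]; exact Real.one_le_exp (by positivity)
    have hGs₂ : c < G ξm μ s₂ := by
      refine lt_of_lt_of_le ?_ (G_lower hμ hμξ hs₂pos h1le)
      rw [hs₂μ, Real.log_exp]
      have : μ * (Real.tanh 1 * (c / (μ * Real.tanh 1) + 1))
          = c + μ * Real.tanh 1 := by field_simp
      rw [this]
      nlinarith
    have hs₁₂ : s₁ < s₂ := by
      by_contra hcon
      push_neg at hcon
      have := (G_strictMono_s hμ hμξ).monotoneOn (mem_Ioi.2 hs₂pos) (mem_Ioi.2 hs₁pos) hcon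
      linarith
    -- IVT
    have hsub : Icc s₁ s₂ ⊆ Ioi 0 := fun x hx => lt_of_lt_of_le hs₁pos hx.1
    have hivt := intermediate_value_Icc hs₁₂.le ((continuousOn_G ξm μ).mono hsub)
    have hcmem : c ∈ Icc (G ξm μ s₁) (G ξm μ s₂) := ⟨hGs₁.le, hGs₂.le⟩
    obtain ⟨s₀, hs₀mem, hs₀eq⟩ := hivt hcmem
    have hs₀pos : 0 < s₀ := lt_of_lt_of_le hs₁pos hs₀mem.1
    refine ⟨1 / (2 * s₀), ⟨by positivity, ?_⟩, ?_⟩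
    · rw [critEq, critEq_iff (by positivity)]
      have : (2 * (1 / (2 * s₀)))⁻¹ = s₀ := by field_simp
      rw [this, hs₀eq]
    · rintro T ⟨hT, hTeq⟩
      rw [critEq, critEq_iff hT] at hTeq
      have hmemT : (2 * T)⁻¹ ∈ Ioi (0:ℝ) := mem_Ioi.2 (by positivity)
      have hmem0 : s₀ ∈ Ioi (0:ℝ) := mem_Ioi.2 hs₀pos
      have heq : (2 * T)⁻¹ = s₀ :=
        (G_strictMono_s hμ hμξ).injOn hmemT hmem0 (by rw [← hTeq, hs₀eq])
      field_simp at heq ⊢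
      linarith
  · -- monotone in μ
    intro lam μ₁ μ₂ T₁ T₂ hlam hμ₁ hμ₁₂ hμ₂ξ hT₁ hT₂ h₁ h₂
    rw [critEq, critEq_iff hT₁] at h₁
    rw [critEq, critEq_iff hT₂] at h₂
    have hμ₁ξ : μ₁ < ξm := hμ₁₂.trans hμ₂ξ
    have hμ₂ : 0 < μ₂ := hμ₁.trans hμ₁₂
    apply key hμ₁ hμ₁ξ hT₁ hT₂
    have hmono := G_strictMono_mu (ξm := ξm) (s := (2 * T₂)⁻¹) (by positivity)
      (mem_Ioi.2 hμ₁) (mem_Ioi.2 hμ₂) hμ₁₂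
    calc G ξm μ₁ (2 * T₂)⁻¹ < G ξm μ₂ (2 * T₂)⁻¹ := hmono
      _ = ξm / lam := h₂.symm
      _ = G ξm μ₁ (2 * T₁)⁻¹ := h₁
  · -- monotone in lam
    intro lam₁ lam₂ μ T₁ T₂ hlam₁ hlam₁₂ hμ hμξ hT₁ hT₂ h₁ h₂
    rw [critEq, critEq_iff hT₁] at h₁
    rw [critEq, critEq_iff hT₂] at h₂
    apply key hμ hμξ hT₁ hT₂
    calc G ξm μ (2 * T₂)⁻¹ = ξm / lam₂ := h₂.symm
      _ < ξm / lam₁ := by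
          apply div_lt_div_of_pos_left hξ hlam₁ hlam₁₂
      _ = G ξm μ (2 * T₁)⁻¹ := h₁
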